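/- For p ≥ 0, k ≥ 0, with h(p) = 4^{-p} binomial(2p,p) and H_l(p) = (p/(l+p)) h(p) h(l) for p ≥ 1 (and H_l(0) = 1_{l=0}), the convolution identity h(p+k) = Σ_{l=0}^{k} H_l(p) h(k-l) holds. -/

import Mathlib

open Real Finset

/-- With `h(p) = 4^{-p} binomial(2p,p)`, `H_l(p) = (p/(l+p)) h(p) h(l)` for `p ≥ 1`,
`H_l(0) = 1_{l=0}`, the convolution identity `h(p+k) = Σ_{l=0}^{k} H_l(p) h(k-l)` holds
for all `p ≥ 0`, `k ≥ 0`. -/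
theorem convolution_identity_h_H (h : ℕ → ℝ) (H : ℕ → ℕ → ℝ)
    (hh : ∀ p : ℕ, h p = (Nat.choose (2 * p) p : ℝ) / 4 ^ p)
    (hH1 : ∀ l p : ℕ, 1 ≤ p → H l p = ((p : ℝ) / ((l : ℝ) + p)) * h p * h l)
    (hH0 : ∀ l : ℕ, H l 0 = if l = 0 then 1 else 0)
    (p k : ℕ) :
    h (p + k) = ∑ l ∈ Finset.range (k + 1), H l p * h (k - l) := by
  have h0 : h 0 = 1 := by simp [hh]
  have hrec : ∀ n : ℕ, h (n+1) = (2*(n:ℝ)+1) / (2*(n:ℝ)+2) * h n := by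
    intro n
    have hc := Nat.succ_mul_centralBinom_succ n
    have hc' : ((n:ℝ)+1) * (Nat.choose (2*(n+1)) (n+1) : ℝ)
        = 2*(2*(n:ℝ)+1) * (Nat.choose (2*n) n : ℝ) := by
      have : ((n+1) * Nat.centralBinom (n+1) : ℝ) = (2 * (2*n+1) * Nat.centralBinom n : ℝ) := by
        exact_mod_cast congrArg (Nat.cast (R := ℝ)) hc
      simpa [Nat.centralBinom] using this
    rw [hh, hh]
    have h4 : (4:ℝ)^n ≠ 0 := by positivity
    have hn1 : (2*(n:ℝ)+2) ≠ 0 := by positivity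
    rw [pow_succ]
    field_simp
    linear_combination 2 * hc'
  have hrefl : ∀ k : ℕ, (∑ m ∈ Finset.range (k+1), h m * h (k-m) / (((k-m : ℕ) : ℝ) + 1))
      = ∑ m ∈ Finset.range (k+1), h m / ((m:ℝ)+1) * h (k-m) := by
    intro k
    rw [← Finset.sum_range_reflect (fun m => h m / ((m:ℝ)+1) * h (k-m)) (k+1)]
    apply Finset.sum_congr rfl
    intro m hm
    have hmk : m ≤ k := Nat.lt_succ_iff.mp (Finset.mem_range.mp hm)
    have e1 : k + 1 - 1 - m = k - m := by omega
    rw [e1, Nat.sub_sub_self hmk]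
    ring
  have hT : ∀ k : ℕ, (∑ m ∈ Finset.range (k+1), h m / ((m:ℝ)+1) * h (k-m)) = 2 * h (k+1) := by
    intro k
    induction k with
    | zero => simp [h0, hrec 0]
    | succ k ih =>
      rw [Finset.sum_range_succ]
      have hstep : ∀ m ∈ Finset.range (k+1), h m / ((m:ℝ)+1) * h (k+1-m)
          = (2*(k:ℝ)+3)/(2*(k:ℝ)+4) * (h m / ((m:ℝ)+1) * h (k-m))
            - (1/(2*(k:ℝ)+4)) * (h m * h (k-m) / (((k-m : ℕ) : ℝ)+1)) := by
        intro m hm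
        have hmk : m ≤ k := Nat.lt_succ_iff.mp (Finset.mem_range.mp hm)
        have e1 : k + 1 - m = (k - m) + 1 := by omega
        rw [e1, hrec (k-m)]
        have ec : ((k - m : ℕ) : ℝ) = (k:ℝ) - m := by
          push_cast [Nat.cast_sub hmk]; ring
        rw [ec]
        have hmr : (m:ℝ) ≤ k := by exact_mod_cast hmk
        have h1 : (m:ℝ)+1 ≠ 0 := by positivity
        have h2 : (k:ℝ) - m + 1 ≠ 0 := by nlinarith
        have h3 : 2*(k:ℝ)+4 ≠ 0 := by positivity
        have h4 : 2*((k:ℝ) - m)+2 ≠ 0 := by nlinarith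
        field_simp
        ring
      rw [Finset.sum_congr rfl hstep, Finset.sum_sub_distrib, ← Finset.mul_sum, ← Finset.mul_sum,
        hrefl k, ih, Nat.sub_self]
      rw [hrec (k+1)]
      push_cast
      have h5 : (k:ℝ)+1+1 ≠ 0 := by positivity
      have h6 : 2*(k:ℝ)+4 ≠ 0 := by positivity
      have h7 : 2*((k:ℝ)+1)+2 ≠ 0 := by positivity
      rw [h0]
      field_simp
      ring
  rcases Nat.eq_zero_or_pos p with hp0 | hp0
  · subst hp0
    simp only [hH0, ite_mul, one_mul, zero_mul]
    rw [Finset.sum_ite_eq' (Finset.range (k+1)) 0 (fun l => h (k - l))]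
    simp
  · have hpr : (0:ℝ) < p := by exact_mod_cast hp0
    have key : ∀ k : ℕ,
        (∑ l ∈ Finset.range (k+1), ((p:ℝ) / ((l:ℝ) + p)) * h p * h l * h (k-l)) = h (p+k) := by
      intro k
      induction k with
      | zero =>
        simp [h0]
        field_simp
      | succ k ih =>
        rw [Finset.sum_range_succ]
        have hstep : ∀ l ∈ Finset.range (k+1), ((p:ℝ) / ((l:ℝ) + p)) * h p * h l * h (k+1-l)
            = (2*(p:ℝ)+2*k+1)/(2*(p:ℝ)+2*(k:ℝ)+2)
                * (((p:ℝ) / ((l:ℝ) + p)) * h p * h l * h (k-l))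
              - ((p:ℝ) * h p/(2*(p:ℝ)+2*(k:ℝ)+2))
                * (h l * h (k-l) / (((k-l : ℕ) : ℝ)+1)) := by
          intro l hl
          have hlk : l ≤ k := Nat.lt_succ_iff.mp (Finset.mem_range.mp hl)
          have e1 : k + 1 - l = (k - l) + 1 := by omega
          rw [e1, hrec (k-l)]
          have ec : ((k - l : ℕ) : ℝ) = (k:ℝ) - l := by
            push_cast [Nat.cast_sub hlk]; ring
          rw [ec]
          have hlr : (l:ℝ) ≤ k := by exact_mod_cast hlk
          have hl0 : (0:ℝ) ≤ l := by positivity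
          have h1 : (l:ℝ) + p ≠ 0 := by nlinarith
          have h2 : (k:ℝ) - l + 1 ≠ 0 := by nlinarith
          have h3 : 2*(p:ℝ)+2*(k:ℝ)+2 ≠ 0 := by nlinarith
          have h4 : 2*((k:ℝ) - l)+2 ≠ 0 := by nlinarith
          field_simp
          ring
        rw [Finset.sum_congr rfl hstep, Finset.sum_sub_distrib, ← Finset.mul_sum,
          ← Finset.mul_sum, hrefl k, hT k, ih, Nat.sub_self]
        have e2 : p + (k+1) = (p+k) + 1 := rfl
        rw [e2, hrec (p+k)]
        push_cast
        have h5 : (k:ℝ)+1+(p:ℝ) ≠ 0 := by nlinarith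
        have h6 : 2*(p:ℝ)+2*(k:ℝ)+2 ≠ 0 := by nlinarith
        have h7 : 2*((p:ℝ)+(k:ℝ))+2 ≠ 0 := by nlinarith
        rw [h0]
        field_simp
        ring
    rw [← key k]
    apply Finset.sum_congr rfl
    intro l _
    rw [hH1 l p hp0]
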